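/- For every dimension d ≥ 1 there exists a finite constant C = C(d) such that for any integer ℓ ≥ 2 there exists a flow ψ^ℓ in ℤ^d connecting p_ℓ to p_{ℓ−1}, with support contained in Λ_ℓ, such that |ψ^ℓ(x;b)| ≤ C ℓ^{−d} for every x ∈ ℤ^d and every b ∈ B. -/

import Mathlib

open Finset Real

/-- The canonical basis vector `e_i` of `ℤ^d`. -/
def eZ (d : ℕ) (i : Fin d) : Fin d → ℤ := fun j => if j = i then 1 else 0

/-- The cube `Λ_ℓ = {z ∈ ℤ^d : 0 ≤ z_i ≤ ℓ-1}`. -/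
noncomputable def Lam (d ℓ : ℕ) : Finset (Fin d → ℤ) := Fintype.piFinset fun _ => Finset.Icc 0 ((ℓ : ℤ) - 1)

/-- The uniform probability measure `p_ℓ` on `Λ_ℓ`. -/
noncomputable def punif (d ℓ : ℕ) (z : Fin d → ℤ) : ℝ :=
  if z ∈ Lam d ℓ then ((ℓ : ℝ) ^ d)⁻¹ else 0

/-- The convolution `q_ℓ = p_ℓ ∗ p_ℓ` (`p_ℓ` vanishes outside `Λ_ℓ`, so the sum is finite). -/
noncomputable def qconv (d ℓ : ℕ) (z : Fin d → ℤ) : ℝ :=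
  ∑ y ∈ Lam d ℓ, punif d ℓ y * punif d ℓ (z - y)

/-- The point mass at the origin of `ℤ^d`. -/
def delta0 (d : ℕ) (z : Fin d → ℤ) : ℝ := if z = 0 then 1 else 0

/-- The support of the flow `φ` is contained in `Λ`. -/
def SupportedIn (d : ℕ) (φ : (Fin d → ℤ) → Fin d → ℝ) (Λ : Finset (Fin d → ℤ)) : Prop :=
  ∀ z i, φ z i ≠ 0 → z ∈ Λ ∧ z + eZ d i ∈ Λ

/-- The flow `φ` connects `p` to `q`:
`p(z) - q(z) = Σ_b (φ(z;b) - φ(z-b;b))` for every `z ∈ ℤ^d`. -/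
def Connects (d : ℕ) (φ : (Fin d → ℤ) → Fin d → ℝ) (p q : (Fin d → ℤ) → ℝ) : Prop :=
  ∀ z, p z - q z = ∑ i : Fin d, (φ z i - φ (z - eZ d i) i)

/-- `g_d(ℓ) = ℓ` if `d = 1`, `log ℓ` if `d = 2`, `1` if `d ≥ 3`. -/
noncomputable def gd (d ℓ : ℕ) : ℝ := if d = 1 then (ℓ : ℝ) else if d = 2 then Real.log ℓ else 1

/-! ### Auxiliary constructions -/

/-- 1D uniform measure on `{0, …, ℓ-1}`. -/
noncomputable def u1 (ℓ : ℕ) (z : ℤ) : ℝ :=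
  if 0 ≤ z ∧ z ≤ (ℓ : ℤ) - 1 then ((ℓ : ℝ))⁻¹ else 0

/-- 1D flow connecting `u1 ℓ` to `u1 (ℓ-1)`. -/
noncomputable def psi1 (ℓ : ℕ) (z : ℤ) : ℝ :=
  if 0 ≤ z ∧ z ≤ (ℓ : ℤ) - 2 then -((z : ℝ) + 1) / ((ℓ : ℝ) * ((ℓ : ℝ) - 1)) else 0

lemma psi1_div {ℓ : ℕ} (hℓ : 2 ≤ ℓ) (z : ℤ) :
    u1 ℓ z - u1 (ℓ - 1) z = psi1 ℓ z - psi1 ℓ (z - 1) := by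
  have h1 : ((ℓ - 1 : ℕ) : ℤ) = (ℓ : ℤ) - 1 := by omega
  have h2 : ((ℓ - 1 : ℕ) : ℝ) = (ℓ : ℝ) - 1 := by exact_mod_cast h1
  have hL : (2 : ℝ) ≤ (ℓ : ℝ) := by exact_mod_cast hℓ
  have hL0 : (ℓ : ℝ) ≠ 0 := by linarith
  have hL1 : (ℓ : ℝ) - 1 ≠ 0 := by linarith
  unfold u1 psi1
  rw [h1, h2]
  split_ifs with a b c e
  all_goals try (exfalso; omega)
  all_goals (field_simp; try ring_nf; try norm_cast; first | omega | (simp only [Int.negSucc_eq]; omega))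

lemma u1_bound {ℓ m : ℕ} (hℓ : 2 ≤ ℓ) (hm : 1 ≤ m) (h : ℓ ≤ 2 * m) (z : ℤ) :
    |u1 m z| ≤ 2 / (ℓ : ℝ) := by
  have hm0 : (0:ℝ) < m := by exact_mod_cast hm
  have h2 : (ℓ:ℝ) ≤ 2 * m := by exact_mod_cast h
  have hl0 : (0:ℝ) < ℓ := by exact_mod_cast (by omega : 0 < ℓ)
  unfold u1
  split_ifs
  · rw [abs_of_nonneg (by positivity), inv_eq_one_div, div_le_div_iff₀ hm0 hl0]
    linarith
  · simp; positivity

lemma psi1_bound {ℓ : ℕ} (hℓ : 2 ≤ ℓ) (z : ℤ) : |psi1 ℓ z| ≤ 2 / (ℓ : ℝ) := by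
  have hL : (2 : ℝ) ≤ (ℓ : ℝ) := by exact_mod_cast hℓ
  unfold psi1
  split_ifs with h
  · obtain ⟨h0, h1⟩ := h
    have h0' : (0:ℝ) ≤ (z:ℝ) := by exact_mod_cast h0
    have h1' : (z:ℝ) ≤ (ℓ:ℝ) - 2 := by exact_mod_cast h1
    rw [abs_div, abs_neg, abs_of_nonneg (by linarith), abs_of_nonneg (by nlinarith)]
    rw [div_le_div_iff₀ (by nlinarith) (by linarith)]
    nlinarith
  · simp; positivity

lemma u1_ne_zero {m : ℕ} {z : ℤ} (h : u1 m z ≠ 0) : 0 ≤ z ∧ z ≤ (m : ℤ) - 1 := by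
  by_contra hc; exact h (by unfold u1; rw [if_neg hc])

lemma psi1_ne_zero {ℓ : ℕ} {z : ℤ} (h : psi1 ℓ z ≠ 0) : 0 ≤ z ∧ z ≤ (ℓ : ℤ) - 2 := by
  by_contra hc; exact h (by unfold psi1; rw [if_neg hc])

lemma tele (f g : ℕ → ℝ) (n : ℕ) :
    (∏ i ∈ range n, f i) - (∏ i ∈ range n, g i)
      = ∑ k ∈ range n, (∏ i ∈ range k, g i) * (f k - g k) * (∏ i ∈ Ico (k+1) n, f i) := by
  induction n with
  | zero => simp
  | succ n ih =>
    rw [prod_range_succ, prod_range_succ, sum_range_succ]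
    have h1 : ∀ k ∈ range n,
        (∏ i ∈ range k, g i) * (f k - g k) * (∏ i ∈ Ico (k+1) (n+1), f i)
          = ((∏ i ∈ range k, g i) * (f k - g k) * (∏ i ∈ Ico (k+1) n, f i)) * f n := by
      intro k hk
      rw [Finset.prod_Ico_succ_top (by simp at hk; omega)]
      ring
    rw [sum_congr rfl h1, ← sum_mul, ← ih]
    simp [Finset.Ico_self]
    ring

/-- Extension of `x : Fin d → ℤ` to `ℕ`. -/
def xext (d : ℕ) (x : Fin d → ℤ) (i : ℕ) : ℤ := if h : i < d then x ⟨i, h⟩ else 0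

lemma punif_prod (d ℓ : ℕ) (z : Fin d → ℤ) :
    punif d ℓ z = ∏ i ∈ range d, u1 ℓ (xext d z i) := by
  rw [← Fin.prod_univ_eq_prod_range]
  have hx : ∀ i : Fin d, xext d z i.val = z i := by intro i; simp [xext]
  simp only [hx]
  unfold punif Lam u1
  by_cases h : z ∈ Fintype.piFinset fun _ : Fin d => Finset.Icc 0 ((ℓ:ℤ) - 1)
  · rw [if_pos h]
    rw [Fintype.mem_piFinset] at h
    have hq : ∀ i : Fin d, (if 0 ≤ z i ∧ z i ≤ (ℓ:ℤ) - 1 then ((ℓ:ℝ))⁻¹ else 0) = ((ℓ:ℝ))⁻¹ := by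
      intro i
      have := h i
      rw [Finset.mem_Icc] at this
      rw [if_pos this]
    rw [Finset.prod_congr rfl (fun i _ => hq i), Finset.prod_const]
    simp [inv_pow]
  · rw [if_neg h]
    rw [Fintype.mem_piFinset] at h
    push_neg at h
    obtain ⟨i, hi⟩ := h
    rw [Finset.mem_Icc] at hi
    exact (Finset.prod_eq_zero (mem_univ i) (by rw [if_neg hi])).symm

/-- The product flow. -/
noncomputable def psiFlow (d ℓ : ℕ) (x : Fin d → ℤ) (k : Fin d) : ℝ :=
  (∏ i ∈ range k.val, u1 (ℓ-1) (xext d x i)) * psi1 ℓ (x k) *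
    ∏ i ∈ Ico (k.val+1) d, u1 ℓ (xext d x i)

theorem flow_step_lemma (d : ℕ) (hd : 1 ≤ d) :
    ∃ C : ℝ, 0 < C ∧ ∀ ℓ : ℕ, 2 ≤ ℓ →
      ∃ ψ : (Fin d → ℤ) → Fin d → ℝ,
        SupportedIn d ψ (Lam d ℓ) ∧
        Connects d ψ (punif d ℓ) (punif d (ℓ - 1)) ∧
        ∀ (x : Fin d → ℤ) (i : Fin d), |ψ x i| ≤ C / (ℓ : ℝ) ^ d := by
  refine ⟨2 ^ d, by positivity, fun ℓ hℓ => ⟨psiFlow d ℓ, ?_, ?_, ?_⟩⟩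
  · -- Support
    intro z k hne
    unfold psiFlow at hne
    have hA : ∀ i ∈ range k.val, u1 (ℓ-1) (xext d z i) ≠ 0 := by
      rw [← Finset.prod_ne_zero_iff]
      intro h0; apply hne; rw [h0]; ring
    have hB : ∀ i ∈ Ico (k.val+1) d, u1 ℓ (xext d z i) ≠ 0 := by
      rw [← Finset.prod_ne_zero_iff]
      intro h0; apply hne; rw [h0]; ring
    have hp : psi1 ℓ (z k) ≠ 0 := by
      intro h0; apply hne; rw [h0]; ring
    have hpk := psi1_ne_zero hp
    have key : ∀ j : Fin d, 0 ≤ z j ∧ z j ≤ (ℓ : ℤ) - 1 := by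
      intro j
      rcases lt_trichotomy j.val k.val with h | h | h
      · have := u1_ne_zero (hA j.val (by simp [h]))
        have hx : xext d z j.val = z j := by simp [xext]
        rw [hx] at this
        omega
      · have hjk : j = k := Fin.ext h
        rw [hjk]; omega
      · have := u1_ne_zero (hB j.val (by simp [Finset.mem_Ico]; omega))
        have hx : xext d z j.val = z j := by simp [xext]
        rw [hx] at this
        omega
    constructor
    · rw [Lam, Fintype.mem_piFinset]
      intro j; rw [Finset.mem_Icc]; exact key j
    · rw [Lam, Fintype.mem_piFinset]
      intro j; rw [Finset.mem_Icc]
      have hzj := key j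
      by_cases hjk : j = k
      · subst hjk
        simp only [Pi.add_apply, eZ, if_pos rfl]
        omega
      · simp only [Pi.add_apply, eZ, if_neg hjk]
        omega
  · -- Connects
    intro z
    rw [punif_prod d ℓ z, punif_prod d (ℓ-1) z]
    rw [tele (fun i => u1 ℓ (xext d z i)) (fun i => u1 (ℓ-1) (xext d z i)) d]
    rw [← Fin.sum_univ_eq_sum_range (fun k =>
      (∏ i ∈ range k, u1 (ℓ-1) (xext d z i)) *
        (u1 ℓ (xext d z k) - u1 (ℓ-1) (xext d z k)) *
        ∏ i ∈ Ico (k+1) d, u1 ℓ (xext d z i)) d]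
    apply Finset.sum_congr rfl
    intro k _
    have hxk : xext d z k.val = z k := by simp [xext]
    have hsub : ∀ i : ℕ, i ≠ k.val → xext d (z - eZ d k) i = xext d z i := by
      intro i hik
      unfold xext
      split_ifs with h
      · simp [eZ, Fin.ext_iff, hik]
      · rfl
    have hsubk : (z - eZ d k) k = z k - 1 := by simp [eZ]
    unfold psiFlow
    rw [hsubk, hxk]
    have hp1 : ∀ i ∈ range k.val, u1 (ℓ-1) (xext d (z - eZ d k) i) = u1 (ℓ-1) (xext d z i) := by
      intro i hi; rw [hsub i (by simp at hi; omega)]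
    have hp2 : ∀ i ∈ Ico (k.val+1) d, u1 ℓ (xext d (z - eZ d k) i) = u1 ℓ (xext d z i) := by
      intro i hi; rw [hsub i (by simp [Finset.mem_Ico] at hi; omega)]
    rw [Finset.prod_congr rfl hp1, Finset.prod_congr rfl hp2]
    rw [psi1_div hℓ (z k)]
    ring
  · -- Bound
    intro x k
    have hL : (0:ℝ) < (ℓ:ℝ) := by exact_mod_cast (by omega : 0 < ℓ)
    have hb1 : |∏ i ∈ range k.val, u1 (ℓ-1) (xext d x i)| ≤ (2 / (ℓ:ℝ)) ^ k.val := by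
      rw [Finset.abs_prod]
      calc ∏ i ∈ range k.val, |u1 (ℓ-1) (xext d x i)|
          ≤ ∏ i ∈ range k.val, (2 / (ℓ:ℝ)) :=
            Finset.prod_le_prod (fun _ _ => abs_nonneg _)
              (fun i _ => u1_bound hℓ (by omega) (by omega) _)
        _ = (2 / (ℓ:ℝ)) ^ k.val := by rw [Finset.prod_const, card_range]
    have hb3 : |∏ i ∈ Ico (k.val+1) d, u1 ℓ (xext d x i)| ≤ (2 / (ℓ:ℝ)) ^ (d - (k.val+1)) := by
      rw [Finset.abs_prod]
      calc ∏ i ∈ Ico (k.val+1) d, |u1 ℓ (xext d x i)|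
          ≤ ∏ i ∈ Ico (k.val+1) d, (2 / (ℓ:ℝ)) :=
            Finset.prod_le_prod (fun _ _ => abs_nonneg _)
              (fun i _ => u1_bound hℓ (by omega) (by omega) _)
        _ = (2 / (ℓ:ℝ)) ^ (d - (k.val+1)) := by rw [Finset.prod_const, Nat.card_Ico]
    have hb2 := psi1_bound hℓ (x k)
    have hnn : (0:ℝ) ≤ 2 / (ℓ:ℝ) := by positivity
    calc |psiFlow d ℓ x k|
        = |∏ i ∈ range k.val, u1 (ℓ-1) (xext d x i)| * |psi1 ℓ (x k)| *
            |∏ i ∈ Ico (k.val+1) d, u1 ℓ (xext d x i)| := by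
          unfold psiFlow; rw [abs_mul, abs_mul]
      _ ≤ (2 / (ℓ:ℝ)) ^ k.val * (2 / (ℓ:ℝ)) * (2 / (ℓ:ℝ)) ^ (d - (k.val+1)) := by
          apply mul_le_mul _ hb3 (abs_nonneg _) (by positivity)
          exact mul_le_mul hb1 hb2 (abs_nonneg _) (by positivity)
      _ = (2 / (ℓ:ℝ)) ^ d := by
          rw [← pow_succ, ← pow_add]
          congr 1
          have := k.isLt
          omega
      _ = 2 ^ d / (ℓ:ℝ) ^ d := div_pow 2 (ℓ:ℝ) d
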